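/- arXiv:1401.7169 — 5 statements merged into one kernel-verified Lean document; each statement's English description precedes it below -/
import Mathlib

section
/- Consider a channel with input alphabet 𝒞 = {c_1,…,c_M}, transition probabilities p_{y|x}, and any (possibly randomized) decoder achieving average error probability P_e under equally likely messages. Let q_y be any auxiliary output distribution. Then the binary hypothesis test between H₁: (x,y) ∼ p_{y|x} p_x and H₀: (x,y) ∼ q_y p_x constructed by declaring H₁ iff the decoder output equals the transmitted message has false-alarm probability exactly 1/M. Consequently, by the Neyman–Pearson lemma, if β(ε) denotes the minimum false-alarm probability over all tests with missed-detection probability at most ε = P_e, then β(P_e) ≤ 1/M, i.e., the code rate R = (1/n)log₂ M satisfies R ≤ −(1/n)log₂ β(P_e). -/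
open MeasureTheory ProbabilityTheory Finset

lemma aux_meas {Y : Type*} [MeasurableSpace Y] {M : ℕ}
    (decoder : Kernel Y (Fin M)) (i : Fin M) :
    Measurable (fun y => ((decoder y) {i}).toReal) :=
  (Kernel.measurable_coe decoder (measurableSet_singleton i)).ennreal_toReal

lemma aux_le_one {Y : Type*} [MeasurableSpace Y] {M : ℕ}
    (decoder : Kernel Y (Fin M)) [IsMarkovKernel decoder] (i : Fin M) (y : Y) :
    ((decoder y) {i}).toReal ≤ 1 := by
  have := prob_le_one (μ := decoder y) (s := {i})
  simpa using ENNReal.toReal_mono (by simp) this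

lemma aux_int {Y : Type*} [MeasurableSpace Y] {M : ℕ}
    (decoder : Kernel Y (Fin M)) [IsMarkovKernel decoder] (i : Fin M)
    (μ : Measure Y) [IsProbabilityMeasure μ] :
    Integrable (fun y => ((decoder y) {i}).toReal) μ := by
  refine Integrable.mono' (integrable_const 1) (aux_meas decoder i).aestronglyMeasurable ?_
  refine ae_of_all _ fun y => ?_
  rw [Real.norm_eq_abs, abs_of_nonneg ENNReal.toReal_nonneg]
  exact aux_le_one decoder i y

lemma aux_sum {Y : Type*} [MeasurableSpace Y] {M : ℕ}
    (decoder : Kernel Y (Fin M)) [IsMarkovKernel decoder]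
    (μ : Measure Y) [IsProbabilityMeasure μ] :
    ∑ i, ∫ y, ((decoder y) {i}).toReal ∂μ = 1 := by
  rw [← integral_finset_sum _ (fun i _ => aux_int decoder i μ)]
  have h : ∀ y : Y, ∑ i, ((decoder y) {i}).toReal = 1 := by
    intro y
    rw [← ENNReal.toReal_sum (by intro a _; exact measure_ne_top _ _)]
    have : ∑ i : Fin M, (decoder y) {i} = (decoder y) Set.univ := by
      rw [← Set.iUnion_of_singleton (Fin M),
        measure_iUnion (fun i j hij => Set.disjoint_singleton.mpr hij)
          (fun i => measurableSet_singleton i)]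
      exact (tsum_fintype _).symm
    rw [this]; simp
  simp only [h, integral_const]; simp

/-- Meta-converse / Neyman–Pearson bound. Messages are uniform on `Fin M`; the
channel sends message `i` to output law `channel i`; a (possibly randomized)
decoder is a Markov kernel `decoder` from outputs to messages, achieving average
error probability `Pe`. For any auxiliary output law `q`, the binary hypothesis
test on `(x,y)` that declares `H₁` iff the decoder output equals the transmitted
message has false-alarm probability exactly `1/M`; consequently the minimum
false-alarm probability `β(Pe)` over all (randomized) tests with
missed-detection probability at most `Pe` satisfies `β(Pe) ≤ 1/M`, i.e. the rate
`R = (1/n)log₂ M` satisfies `R ≤ −(1/n)log₂ β(Pe)`. -/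
theorem stmt_4 {Y : Type*} [MeasurableSpace Y] (M : ℕ) (hM : 0 < M)
    (channel : Fin M → Measure Y) (hchan : ∀ i, IsProbabilityMeasure (channel i))
    (q : Measure Y) (hq : IsProbabilityMeasure q)
    (decoder : Kernel Y (Fin M)) (hdec : IsMarkovKernel decoder)
    (Pe : ℝ)
    (hPe : Pe = 1 - (1 / (M : ℝ)) *
      ∑ i, ∫ y, ((decoder y) {i}).toReal ∂(channel i))
    (β : ℝ → ℝ)
    (hβ : ∀ ε : ℝ, β ε = sInf {f : ℝ |
      ∃ T : Fin M → Y → ℝ,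
        (∀ i, Measurable (T i)) ∧
        (∀ i y, T i y ∈ Set.Icc (0 : ℝ) 1) ∧
        (1 / (M : ℝ)) * ∑ i, ∫ y, (1 - T i y) ∂(channel i) ≤ ε ∧
        f = (1 / (M : ℝ)) * ∑ i, ∫ y, T i y ∂q})
    (n : ℕ) (hn : 0 < n) (R : ℝ) (hR : R = (1 / (n : ℝ)) * Real.logb 2 M) :
    (1 / (M : ℝ)) * ∑ i, ∫ y, ((decoder y) {i}).toReal ∂q = 1 / (M : ℝ) ∧
    β Pe ≤ 1 / (M : ℝ) ∧
    (0 < β Pe → R ≤ -(1 / (n : ℝ)) * Real.logb 2 (β Pe)) := by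
  haveI := hdec
  haveI := hq
  have hMr : (0 : ℝ) < M := by exact_mod_cast hM
  have h1 : (1 / (M : ℝ)) * ∑ i, ∫ y, ((decoder y) {i}).toReal ∂q = 1 / (M : ℝ) := by
    rw [aux_sum decoder q]; ring
  have key : β Pe ≤ 1 / (M : ℝ) := by
    rw [hβ]
    have hmem : (1 / (M : ℝ)) ∈ {f : ℝ |
      ∃ T : Fin M → Y → ℝ,
        (∀ i, Measurable (T i)) ∧
        (∀ i y, T i y ∈ Set.Icc (0 : ℝ) 1) ∧
        (1 / (M : ℝ)) * ∑ i, ∫ y, (1 - T i y) ∂(channel i) ≤ Pe ∧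
        f = (1 / (M : ℝ)) * ∑ i, ∫ y, T i y ∂q} := by
      refine ⟨fun i y => ((decoder y) {i}).toReal, fun i => aux_meas decoder i,
        fun i y => ⟨ENNReal.toReal_nonneg, aux_le_one decoder i y⟩, ?_, h1.symm⟩
      have : ∀ i : Fin M, ∫ y, (1 - ((decoder y) {i}).toReal) ∂(channel i)
          = 1 - ∫ y, ((decoder y) {i}).toReal ∂(channel i) := by
        intro i
        haveI := hchan i
        rw [integral_sub (integrable_const 1) (aux_int decoder i (channel i))]
        simp
      rw [Finset.sum_congr rfl (fun i _ => this i)]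
      rw [Finset.sum_sub_distrib]
      rw [hPe]
      simp only [Finset.sum_const, Finset.card_univ, Fintype.card_fin, nsmul_eq_mul, mul_one]
      have : (1 / (M : ℝ)) * (M : ℝ) = 1 := by field_simp
      nlinarith [this]
    have hbdd : BddBelow {f : ℝ |
      ∃ T : Fin M → Y → ℝ,
        (∀ i, Measurable (T i)) ∧
        (∀ i y, T i y ∈ Set.Icc (0 : ℝ) 1) ∧
        (1 / (M : ℝ)) * ∑ i, ∫ y, (1 - T i y) ∂(channel i) ≤ Pe ∧
        f = (1 / (M : ℝ)) * ∑ i, ∫ y, T i y ∂q} := by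
      refine ⟨0, fun f hf => ?_⟩
      obtain ⟨T, _, hT01, _, hfeq⟩ := hf
      rw [hfeq]
      apply mul_nonneg (by positivity)
      apply Finset.sum_nonneg
      intro i _
      exact integral_nonneg fun y => (hT01 i y).1
    exact csInf_le hbdd hmem
  refine ⟨h1, key, fun hpos => ?_⟩
  have hnr : (0 : ℝ) < n := by exact_mod_cast hn
  have hlog : Real.logb 2 (β Pe) ≤ Real.logb 2 (1 / (M : ℝ)) :=
    Real.logb_le_logb_of_le (by norm_num) hpos key
  have hinv : Real.logb 2 (1 / (M : ℝ)) = - Real.logb 2 M := by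
    rw [one_div, Real.logb_inv]
  rw [hR]
  have h2 : (1 / (n : ℝ)) > 0 := by positivity
  nlinarith [hlog, hinv, mul_le_mul_of_nonneg_left hlog (le_of_lt h2)]
end

section
/- Fix γ > 0 and set s_γ = sinh(γ). For φ ∈ (0, π), define r(φ) = asinh(s_γ/sinc(φ)) with sinc(φ) = sin(φ)/φ. Then e^{r(φ)−γ} sinc(φ) = (s_γ + √(s_γ² + sinc²(φ)))/(s_γ + cosh(γ)), and consequently 1 − ((cosh(γ)−s_γ)/(cosh(γ)+s_γ))(1 − sinc²(φ)) ≤ e^{r(φ)−γ} sinc(φ) ≤ 1. -/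
/-- For `γ > 0`, `s_γ = sinh γ`, `φ ∈ (0,π)`, `sinc φ = sin φ / φ`,
`r(φ) = arsinh(s_γ / sinc φ)`:
`e^{r(φ)−γ} sinc φ = (s_γ + √(s_γ² + sinc² φ))/(s_γ + cosh γ)`, and hence
`1 − ((cosh γ − s_γ)/(cosh γ + s_γ))(1 − sinc² φ) ≤ e^{r(φ)−γ} sinc φ ≤ 1`. -/
theorem stmt_10 (γ : ℝ) (hγ : 0 < γ) (φ : ℝ) (hφ : φ ∈ Set.Ioo 0 Real.pi) :
    Real.exp (Real.arsinh (Real.sinh γ / (Real.sin φ / φ)) - γ) * (Real.sin φ / φ) =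
      (Real.sinh γ + Real.sqrt (Real.sinh γ ^ 2 + (Real.sin φ / φ) ^ 2)) /
        (Real.sinh γ + Real.cosh γ) ∧
    1 - ((Real.cosh γ - Real.sinh γ) / (Real.cosh γ + Real.sinh γ)) *
          (1 - (Real.sin φ / φ) ^ 2) ≤
      Real.exp (Real.arsinh (Real.sinh γ / (Real.sin φ / φ)) - γ) * (Real.sin φ / φ) ∧
    Real.exp (Real.arsinh (Real.sinh γ / (Real.sin φ / φ)) - γ) * (Real.sin φ / φ) ≤ 1 := by
  obtain ⟨hφ0, hφπ⟩ := hφ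
  set s := Real.sinh γ with hs_def
  set c := Real.cosh γ with hc_def
  set t := Real.sin φ / φ with ht_def
  have hs : 0 < s := Real.sinh_pos_iff.mpr hγ
  have hc : 0 < c := Real.cosh_pos γ
  have hsc : s < c := by
    have := Real.cosh_sub_sinh γ
    nlinarith [Real.exp_pos (-γ)]
  have ht0 : 0 < t := div_pos (Real.sin_pos_of_pos_of_lt_pi hφ0 hφπ) hφ0
  have ht1 : t ≤ 1 := by
    rw [ht_def, div_le_one hφ0]
    exact Real.sin_le hφ0.le
  have hc2 : c ^ 2 - s ^ 2 = 1 := Real.cosh_sq_sub_sinh_sq γ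
  have hexp : Real.exp γ = s + c := (Real.sinh_add_cosh γ).symm
  have hsqpos : 0 < s ^ 2 + t ^ 2 := by positivity
  have h1 : (1 : ℝ) + (s / t) ^ 2 = (s ^ 2 + t ^ 2) / t ^ 2 := by
    field_simp
    ring
  have hsq : Real.sqrt (1 + (s / t) ^ 2) = Real.sqrt (s ^ 2 + t ^ 2) / t := by
    rw [h1, Real.sqrt_div (by positivity : (0:ℝ) ≤ s ^ 2 + t ^ 2), Real.sqrt_sq ht0.le]
  have key : Real.exp (Real.arsinh (s / t) - γ) * t
      = (s + Real.sqrt (s ^ 2 + t ^ 2)) / (s + c) := by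
    rw [Real.exp_sub, Real.exp_arsinh, hexp, hsq]
    field_simp
  refine ⟨key, ?_, ?_⟩
  · rw [key]
    rw [le_div_iff₀ (by linarith)]
    have hle : s + (c - s) * t ^ 2 ≤ Real.sqrt (s ^ 2 + t ^ 2) := by
      apply Real.le_sqrt_of_sq_le
      have ht2 : t ^ 2 ≤ 1 := by nlinarith
      have hA : 2 * s * (c - s) + (c - s) ^ 2 * t ^ 2 ≤ 1 := by
        nlinarith [sq_nonneg (c - s)]
      nlinarith [mul_le_mul_of_nonneg_left hA (sq_nonneg t)]
    have h2 : (1 - (c - s) / (c + s) * (1 - t ^ 2)) * (s + c)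
        = s + c - (c - s) * (1 - t ^ 2) := by
      field_simp
      ring
    rw [h2]
    nlinarith [hle]
  · rw [key, div_le_one (by linarith)]
    have : Real.sqrt (s ^ 2 + t ^ 2) ≤ c := by
      have h3 : s ^ 2 + t ^ 2 ≤ c ^ 2 := by nlinarith
      calc Real.sqrt (s ^ 2 + t ^ 2) ≤ Real.sqrt (c ^ 2) := Real.sqrt_le_sqrt h3
        _ = c := Real.sqrt_sq hc.le
    linarith
end

section
/- Fix γ > 0 and s_γ = sinh(γ), c_γ = cosh(γ). For φ ∈ (0,π) let r(φ) = asinh(s_γ/sinc(φ)), α(x) = c_γ − cosh(x) + s_γ(x−γ), and h(φ) = (1 − cos(φ))cosh(r(φ)) + α(r(φ)). Then h(φ) ≥ 0 and h(φ) ≤ (1 − cos(φ))cosh(r(φ)) for all φ ∈ (0,π). -/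
/-- Tangent line inequality for exp. -/
lemma exp_tangent' (a b : ℝ) : Real.exp a + Real.exp a * (b - a) ≤ Real.exp b := by
  have h := Real.add_one_le_exp (b - a)
  have h2 : Real.exp a * ((b - a) + 1) ≤ Real.exp a * Real.exp (b - a) :=
    mul_le_mul_of_nonneg_left h (Real.exp_pos a).le
  rw [← Real.exp_add] at h2
  have : a + (b - a) = b := by ring
  rw [this] at h2
  nlinarith
/-- Tangent line inequality for cosh (convexity). -/
lemma cosh_tangent (a b : ℝ) :
    Real.cosh a + Real.sinh a * (b - a) ≤ Real.cosh b := by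
  have e1 := exp_tangent' a b
  have e2 := exp_tangent' (-a) (-b)
  have hne : -b - -a = -(b - a) := by ring
  rw [hne] at e2
  rw [Real.cosh_eq, Real.cosh_eq, Real.sinh_eq]
  nlinarith [e1, e2]

/-- Tangent line inequality for sinh on the nonnegative reals. -/
lemma sinh_tangent {a b : ℝ} (ha : 0 ≤ a) (hab : a ≤ b) :
    Real.sinh a + Real.cosh a * (b - a) ≤ Real.sinh b := by
  set d := b - a with hd
  have hd0 : 0 ≤ d := by simp only [hd]; linarith
  have hA : d + 1 ≤ Real.exp d := Real.add_one_le_exp d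
  have hB : -d + 1 ≤ Real.exp (-d) := Real.add_one_le_exp (-d)
  have hsd : d ≤ Real.sinh d := by
    rcases eq_or_lt_of_le hd0 with h | h
    · simp [← h]
    · exact (Real.self_lt_sinh_iff.mpr h).le
  have hb : b = a + d := by rw [hd]; ring
  rw [hb, Real.sinh_eq, Real.sinh_eq, Real.cosh_eq]
  rw [Real.sinh_eq] at hsd
  have e1 : Real.exp (a + d) = Real.exp a * Real.exp d := Real.exp_add a d
  have e2 : Real.exp (-(a + d)) = Real.exp (-a) * Real.exp (-d) := by
    rw [← Real.exp_add]; ring_nf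
  have hga : 1 ≤ Real.exp a := Real.one_le_exp ha
  have hgna : Real.exp (-a) ≤ 1 := Real.exp_le_one_iff.mpr (by linarith)
  have pna := Real.exp_pos (-a)
  rw [e1, e2]
  have hAd : 0 ≤ Real.exp d - 1 - d := by linarith
  have hAB : Real.exp (-d) - 1 + d ≤ Real.exp d - 1 - d := by linarith
  have hBd : 0 ≤ Real.exp (-d) - 1 + d := by linarith
  nlinarith [mul_le_mul_of_nonneg_left hAB pna.le,
    mul_le_mul_of_nonneg_right hga hAd,
    mul_le_mul_of_nonneg_right hgna hBd]

/-- sinh ≤ cosh. -/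
lemma sinh_le_cosh' (x : ℝ) : Real.sinh x ≤ Real.cosh x := by
  have := Real.exp_pos (-x)
  have h := Real.cosh_sub_sinh x
  linarith

lemma poly_aux {x : ℝ} (h0 : 0 ≤ x) (h1 : x ≤ 0.63) :
    x * (3/2 - x/4)^2 ≤ 8 * (1 - x/4)^3 * (1 - x/2) := by
  nlinarith [sq_nonneg x, sq_nonneg (1 - x), mul_nonneg h0 h0]

/-- Key transcendental inequality: `(φ - sin φ)² ≤ φ sin φ (1 - cos φ)` on `(0, π/2]`. -/
lemma key_ineq {φ : ℝ} (h0 : 0 < φ) (h2 : φ ≤ Real.pi / 2) :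
    (φ - Real.sin φ) ^ 2 ≤ φ * Real.sin φ * (1 - Real.cos φ) := by
  have hpi : Real.pi < 3.15 := by
    have := Real.pi_lt_d2; linarith
  set t := φ / 2 with hdef
  have ht0 : 0 < t := by positivity
  have htb : t ≤ 0.7875 := by rw [hdef]; linarith
  have ht1 : t ≤ 1 := by linarith
  have htsq : t ^ 2 ≤ 0.63 := by nlinarith
  have hφ : φ = 2 * t := by rw [hdef]; ring
  have hs : t - t ^ 3 / 4 < Real.sin t := by
    have := Real.sin_gt_sub_cube ht0
    linarith [pow_pos ht0 3]
  have hs2 := Real.sin_lt ht0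
  have hsnn : 0 < Real.sin t := Real.sin_pos_of_pos_of_lt_pi ht0 (by nlinarith)
  have hc1 : 1 - t ^ 2 / 2 ≤ Real.cos t := by
    have hhalf : Real.sin (t / 2) < t / 2 := Real.sin_lt (by positivity)
    have hhalf0 : 0 ≤ Real.sin (t / 2) :=
      Real.sin_nonneg_of_nonneg_of_le_pi (by positivity) (by nlinarith)
    have hcos : Real.cos (2 * (t / 2)) = Real.cos (t/2) ^ 2 - Real.sin (t/2) ^ 2 :=
      Real.cos_two_mul' (t / 2)
    rw [show 2 * (t/2) = t by ring] at hcos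
    have hpyth := Real.sin_sq_add_cos_sq (t / 2)
    nlinarith
  have hc2 : Real.cos t ≤ 1 := Real.cos_le_one t
  have hsinφ : Real.sin φ = 2 * Real.sin t * Real.cos t := by
    rw [hφ, Real.sin_two_mul]
  have hcosφ : Real.cos φ = 1 - 2 * Real.sin t ^ 2 := by
    rw [hφ, Real.cos_two_mul']
    have := Real.sin_sq_add_cos_sq t
    nlinarith
  rw [hsinφ, hcosφ, hφ]
  set s := Real.sin t
  set c := Real.cos t
  have hslb : 0 < t - t^3/4 := by nlinarith
  have hclb : 0 < 1 - t^2/2 := by nlinarith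
  have hsclb : (t - t^3/4) * (1 - t^2/2) ≤ s * c :=
    mul_le_mul hs.le hc1 hclb.le hsnn.le
  have hub : 2*t - 2*(s*c) ≤ 3*t^3/2 - t^5/4 := by
    have : 2*t - 2*((t - t^3/4) * (1 - t^2/2)) = 3*t^3/2 - t^5/4 := by ring
    linarith
  have hlb : 0 ≤ 2*t - 2*(s*c) := by nlinarith
  have hcube : (t - t^3/4)^3 * (1 - t^2/2) ≤ s^3 * c := by
    have h3 : (t - t^3/4)^3 ≤ s^3 := pow_le_pow_left₀ hslb.le hs.le 3
    exact mul_le_mul h3 hc1 hclb.le (by positivity)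
  have h7 : (2*t - 2*(s*c))^2 ≤ (3*t^3/2 - t^5/4)^2 := by
    apply pow_le_pow_left₀ hlb hub
  have hpoly := poly_aux (sq_nonneg t) htsq
  have h5 : (3*t^3/2 - t^5/4)^2 = t^4 * (t^2 * (3/2 - t^2/4)^2) := by ring
  have h6 : 8*t*((t - t^3/4)^3 * (1 - t^2/2)) = t^4 * (8 * (1 - t^2/4)^3 * (1 - t^2/2)) := by ring
  have h9 : (3*t^3/2 - t^5/4)^2 ≤ 8*t*((t - t^3/4)^3 * (1 - t^2/2)) := by
    rw [h5, h6]
    exact mul_le_mul_of_nonneg_left hpoly (by positivity)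
  have h10 : 8*t*((t - t^3/4)^3 * (1 - t^2/2)) ≤ 8*t*(s^3*c) := by
    apply mul_le_mul_of_nonneg_left hcube (by positivity)
  have hgoal : 2 * t * (2 * s * c) * (1 - (1 - 2 * s ^ 2)) = 8*t*(s^3*c) := by ring
  calc (2 * t - 2 * s * c) ^ 2 = (2*t - 2*(s*c))^2 := by ring
    _ ≤ (3*t^3/2 - t^5/4)^2 := h7
    _ ≤ 8*t*((t - t^3/4)^3 * (1 - t^2/2)) := h9
    _ ≤ 8*t*(s^3*c) := h10
    _ = 2 * t * (2 * s * c) * (1 - (1 - 2 * s ^ 2)) := hgoal.symm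

/-- For `γ > 0`, `r(φ) = arsinh(sinh γ / (sin φ / φ))`,
`α(x) = cosh γ − cosh x + sinh γ (x − γ)`, and
`h(φ) = (1 − cos φ) cosh(r φ) + α(r φ)`, one has
`0 ≤ h(φ) ≤ (1 − cos φ) cosh(r φ)` on `(0, π)`. -/
theorem stmt_12 (γ : ℝ) (hγ : 0 < γ) (r α h : ℝ → ℝ)
    (hr : ∀ φ, r φ = Real.arsinh (Real.sinh γ / (Real.sin φ / φ)))
    (hα : ∀ x, α x = Real.cosh γ - Real.cosh x + Real.sinh γ * (x - γ))
    (hh : ∀ φ, h φ = (1 - Real.cos φ) * Real.cosh (r φ) + α (r φ)) :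
    ∀ φ ∈ Set.Ioo 0 Real.pi,
      0 ≤ h φ ∧ h φ ≤ (1 - Real.cos φ) * Real.cosh (r φ) := by
  intro φ hφ
  obtain ⟨hφ0, hφπ⟩ := hφ
  have hsin : 0 < Real.sin φ := Real.sin_pos_of_pos_of_lt_pi hφ0 hφπ
  have hsinlt : Real.sin φ < φ := Real.sin_lt hφ0
  have hS : 0 < Real.sinh γ := Real.sinh_pos_iff.mpr hγ
  set S := Real.sinh γ with hSdef
  have hsr : Real.sinh (r φ) = S * φ / Real.sin φ := by
    rw [hr, Real.sinh_arsinh]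
    field_simp
  have hsrge : S ≤ Real.sinh (r φ) := by
    rw [hsr, le_div_iff₀ hsin]
    nlinarith
  have hrγ : γ ≤ r φ := by
    have h1 : Real.arsinh S ≤ Real.arsinh (Real.sinh (r φ)) :=
      Real.arsinh_le_arsinh.mpr hsrge
    rwa [hSdef, Real.arsinh_sinh, Real.arsinh_sinh] at h1
  have hcoshr : 0 < Real.cosh (r φ) := Real.cosh_pos (r φ)
  have hcoshγ : 0 < Real.cosh γ := Real.cosh_pos γ
  have hsc : Real.sinh (r φ) ≤ Real.cosh (r φ) := sinh_le_cosh' _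
  have hscγ : S ≤ Real.cosh γ := sinh_le_cosh' γ
  have hexp : h φ = Real.cosh γ - Real.cos φ * Real.cosh (r φ) + S * (r φ - γ) := by
    rw [hh, hα]; ring
  constructor
  · rw [hexp]
    rcases le_or_gt (Real.cos φ) 0 with hcos | hcos
    · nlinarith
    · have hφhalf : φ ≤ Real.pi / 2 := by
        by_contra hcon
        push_neg at hcon
        have : Real.cos φ ≤ 0 := Real.cos_nonpos_of_pi_div_two_le_of_le hcon.le
          (by linarith [Real.pi_pos])
        linarith
      have hkey := key_ineq hφ0 hφhalf
      have hdiff : Real.sinh (r φ) - S = S * (φ - Real.sin φ) / Real.sin φ := by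
        rw [hsr]; field_simp
      have hdiffnn : 0 ≤ Real.sinh (r φ) - S := by linarith
      have hb := sinh_tangent hγ.le hrγ
      rw [← hSdef] at hb
      have ha := cosh_tangent (r φ) γ
      have hcosle : Real.cos φ ≤ 1 := Real.cos_le_one φ
      have hmain : (Real.sinh (r φ) - S) ^ 2 ≤
          (1 - Real.cos φ) * Real.cosh (r φ) * Real.cosh γ := by
        have h1 : (Real.sinh (r φ) - S) ^ 2 =
            S ^ 2 * (φ - Real.sin φ) ^ 2 / Real.sin φ ^ 2 := by
          rw [hdiff]; field_simp
        have h2 : S ^ 2 * (φ - Real.sin φ) ^ 2 / Real.sin φ ^ 2 ≤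
            S ^ 2 * (φ * Real.sin φ * (1 - Real.cos φ)) / Real.sin φ ^ 2 := by
          apply div_le_div_of_nonneg_right _ (by positivity)
          nlinarith
        have h3 : S ^ 2 * (φ * Real.sin φ * (1 - Real.cos φ)) / Real.sin φ ^ 2
            = (1 - Real.cos φ) * (S * φ / Real.sin φ) * S := by
          field_simp
        have h4 : (1 - Real.cos φ) * (S * φ / Real.sin φ) * S ≤
            (1 - Real.cos φ) * Real.cosh (r φ) * Real.cosh γ := by
          rw [← hsr]
          have hmm : Real.sinh (r φ) * S ≤ Real.cosh (r φ) * Real.cosh γ :=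
            mul_le_mul hsc hscγ hS.le hcoshr.le
          have hcnn : (0:ℝ) ≤ 1 - Real.cos φ := by linarith
          calc (1 - Real.cos φ) * Real.sinh (r φ) * S
              = (1 - Real.cos φ) * (Real.sinh (r φ) * S) := by ring
            _ ≤ (1 - Real.cos φ) * (Real.cosh (r φ) * Real.cosh γ) :=
                mul_le_mul_of_nonneg_left hmm hcnn
            _ = (1 - Real.cos φ) * Real.cosh (r φ) * Real.cosh γ := by ring
        rw [h1]
        calc S ^ 2 * (φ - Real.sin φ) ^ 2 / Real.sin φ ^ 2
            ≤ S ^ 2 * (φ * Real.sin φ * (1 - Real.cos φ)) / Real.sin φ ^ 2 := h2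
          _ = (1 - Real.cos φ) * (S * φ / Real.sin φ) * S := h3
          _ ≤ (1 - Real.cos φ) * Real.cosh (r φ) * Real.cosh γ := h4
      have hbb : Real.cosh γ * (r φ - γ) ≤ Real.sinh (r φ) - S := by linarith
      have hrγnn : 0 ≤ r φ - γ := by linarith
      -- (sinh r - S)(r - γ) * cosh γ ≤ (sinh r - S)^2 ≤ (1-cosφ) cosh r cosh γ
      have hchain : (Real.sinh (r φ) - S) * (r φ - γ) * Real.cosh γ ≤
          (Real.sinh (r φ) - S) ^ 2 := by nlinarith
      have hchain2 : (Real.sinh (r φ) - S) * (r φ - γ) ≤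
          (1 - Real.cos φ) * Real.cosh (r φ) := by
        have hle := le_trans hchain hmain
        exact (mul_le_mul_iff_of_pos_right hcoshγ).mp hle
      nlinarith [hchain2, ha]
  · rw [hh, hα]
    have := cosh_tangent γ (r φ)
    rw [← hSdef] at this
    linarith
end

section
/- Fix Ω > 0 and n ≥ 1, and define γ̄ = (1/2)ln(1+Ω). For λ' related to γ by λ' = Ω/(4 sinh²(γ)), the choice γ = γ̄ gives λ' = Ω/(4 sinh²(γ̄)) and then θ_FA(γ̄) := ln(Ω/(2 sinh(γ̄))) − ln(1+Ω) = −γ̄, and v_FA(γ̄) := −α(θ_FA(γ̄))/sinh(γ̄) = ln(1+Ω), where α(x) = cosh(γ̄) − cosh(x) + sinh(γ̄)(x − γ̄). -/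
/-- At `γ = γ̄ = (1/2) ln(1+Ω)` one has `θ_FA(γ̄) = ln(Ω/(2 sinh γ̄)) − ln(1+Ω) = −γ̄`
and `v_FA(γ̄) = −α(θ_FA(γ̄))/sinh γ̄ = ln(1+Ω)`, where
`α(x) = cosh γ̄ − cosh x + sinh γ̄ (x − γ̄)`. -/
theorem stmt_16 (n : ℕ) (hn : 1 ≤ n) (Ω : ℝ) (hΩ : 0 < Ω)
    (γbar : ℝ) (hγbar : γbar = (1 / 2) * Real.log (1 + Ω))
    (α : ℝ → ℝ)
    (hα : ∀ x, α x = Real.cosh γbar - Real.cosh x + Real.sinh γbar * (x - γbar)) :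
    Real.log (Ω / (2 * Real.sinh γbar)) - Real.log (1 + Ω) = -γbar ∧
    -α (Real.log (Ω / (2 * Real.sinh γbar)) - Real.log (1 + Ω)) / Real.sinh γbar =
      Real.log (1 + Ω) := by
  have h1 : (0:ℝ) < 1 + Ω := by linarith
  have hs : (0:ℝ) < Real.sqrt (1 + Ω) := Real.sqrt_pos.mpr h1
  have hsq : Real.sqrt (1 + Ω) ^ 2 = 1 + Ω := Real.sq_sqrt h1.le
  have hγ : γbar = Real.log (Real.sqrt (1 + Ω)) := by
    rw [hγbar, Real.log_sqrt h1.le]; ring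
  have hsinh : Real.sinh γbar = Ω / (2 * Real.sqrt (1 + Ω)) := by
    rw [hγ, Real.sinh_log hs]
    rw [show (1:ℝ)+Ω = Real.sqrt (1+Ω)^2 from hsq.symm]
    field_simp
    ring_nf
    rw [Real.sq_sqrt (sq_nonneg _), hsq]; ring
  have hsinhpos : 0 < Real.sinh γbar := by
    rw [hsinh]; positivity
  have harg : Ω / (2 * Real.sinh γbar) = Real.sqrt (1 + Ω) := by
    rw [hsinh]; field_simp
  have hlog : Real.log (Ω / (2 * Real.sinh γbar)) = γbar := by
    rw [harg, ← hγ]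
  have hlog1 : Real.log (1 + Ω) = 2 * γbar := by rw [hγbar]; ring
  have h1' : Real.log (Ω / (2 * Real.sinh γbar)) - Real.log (1 + Ω) = -γbar := by
    rw [hlog, hlog1]; ring
  refine ⟨h1', ?_⟩
  rw [h1', hα, Real.cosh_neg, hlog1]
  field_simp
  ring
end

section
/- Let q(x) = e^{x²/2} Q(x) where Q is the Gaussian complementary CCDF, and fix n ≥ 1 and P_e ∈ (0, 1/2). The equation q(√(n(λ'−1)²/2)) · e^{−(n/2)(λ'−1−ln λ')} = P_e has a solution λ' > 1, and as n → ∞ this solution satisfies λ' = 1 + √(2x/n) + o(1/√n) where x solves Q(√x) = P_e; consequently the asymptotic excess-power expression 10 log₁₀(λ') satisfies 10 log₁₀(λ') ∼ 10 log₁₀(e) · √(2/n) · Q⁻¹(P_e). -/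
open Real Filter Asymptotics

/-- The standard Gaussian complementary CDF. -/
noncomputable def gaussQ (x : ℝ) : ℝ :=
  ∫ t in Set.Ioi x, Real.exp (-t ^ 2 / 2) / Real.sqrt (2 * Real.pi)

/-- `q(x) = e^{x²/2} Q(x)`. -/
noncomputable def gaussq (x : ℝ) : ℝ := Real.exp (x ^ 2 / 2) * gaussQ x

open MeasureTheory Set in
private lemma _dummy : True := trivial

open MeasureTheory Set

noncomputable def phi (t : ℝ) : ℝ := Real.exp (-t ^ 2 / 2) / Real.sqrt (2 * Real.pi)

lemma phi_eq (t : ℝ) : phi t = Real.exp (-(1/2) * t ^ 2) / Real.sqrt (2 * Real.pi) := by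
  unfold phi; ring_nf

lemma continuous_phi : Continuous phi := by
  unfold phi
  exact (Real.continuous_exp.comp (by continuity)).div_const _

lemma phi_pos (t : ℝ) : 0 < phi t := by
  unfold phi
  positivity

lemma integrable_phi : Integrable phi := by
  have : Integrable (fun t : ℝ => Real.exp (-(1/2) * t ^ 2)) := integrable_exp_neg_mul_sq (by norm_num)
  have := this.div_const (Real.sqrt (2 * Real.pi))
  exact this.congr (Eventually.of_forall fun t => (phi_eq t).symm)

lemma gaussQ_eq_phi (x : ℝ) : gaussQ x = ∫ t in Set.Ioi x, phi t := rfl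

lemma gaussQ_split {a b : ℝ} (hab : a ≤ b) :
    gaussQ a = (∫ t in a..b, phi t) + gaussQ b := by
  rw [gaussQ_eq_phi, gaussQ_eq_phi, intervalIntegral.integral_of_le hab,
    ← MeasureTheory.setIntegral_union (Set.Ioc_disjoint_Ioi le_rfl) measurableSet_Ioi
      integrable_phi.integrableOn integrable_phi.integrableOn,
    Set.Ioc_union_Ioi_eq_Ioi hab]

lemma gaussQ_primitive (x : ℝ) : gaussQ x = gaussQ 0 - ∫ t in (0:ℝ)..x, phi t := by
  rcases le_total 0 x with h | h
  · rw [gaussQ_split h]; ring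
  · rw [gaussQ_split h, intervalIntegral.integral_symm]; ring

lemma continuous_gaussQ : Continuous gaussQ := by
  have : Continuous fun x => ∫ t in (0:ℝ)..x, phi t :=
    intervalIntegral.continuous_primitive (fun a b => integrable_phi.intervalIntegrable) 0
  have h2 : Continuous fun x => gaussQ 0 - ∫ t in (0:ℝ)..x, phi t := continuous_const.sub this
  exact h2.congr fun y => (gaussQ_primitive y).symm

lemma gaussQ_strictAnti : StrictAnti gaussQ := by
  intro a b hab
  have h : gaussQ a = (∫ t in a..b, phi t) + gaussQ b := gaussQ_split hab.le
  have hpos : 0 < ∫ t in a..b, phi t :=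
    intervalIntegral.intervalIntegral_pos_of_pos (f := phi)
      integrable_phi.intervalIntegrable (fun t => phi_pos t) hab
  linarith

lemma gaussQ_nonneg (y : ℝ) : 0 ≤ gaussQ y :=
  MeasureTheory.setIntegral_nonneg measurableSet_Ioi (fun t _ => (phi_pos t).le)

lemma gaussQ_pos (y : ℝ) : 0 < gaussQ y := by
  have h := gaussQ_split (le_of_lt (lt_add_one y))
  have hpos : 0 < ∫ t in y..(y+1), phi t :=
    intervalIntegral.intervalIntegral_pos_of_pos integrable_phi.intervalIntegrable
      (fun t => phi_pos t) (lt_add_one y)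
  have := gaussQ_nonneg (y+1)
  linarith

lemma gaussQ_zero : gaussQ 0 = 1 / 2 := by
  have h : gaussQ 0 = ∫ t in Set.Ioi (0:ℝ), Real.exp (-(1/2) * t ^ 2) / Real.sqrt (2 * Real.pi) := by
    rw [gaussQ_eq_phi]
    exact MeasureTheory.setIntegral_congr_fun measurableSet_Ioi fun t _ => phi_eq t
  rw [h, MeasureTheory.integral_div, integral_gaussian_Ioi]
  rw [show Real.pi / (1/2) = 2 * Real.pi by ring]
  rw [div_div, div_eq_iff (by positivity)]
  ring

lemma integrable_mul_phi (s : ℝ) : IntegrableOn (fun t => t * phi t) (Set.Ioi s) := by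
  have h : Integrable (fun t : ℝ => t * Real.exp (-(1/2) * t ^ 2)) :=
    integrable_mul_exp_neg_mul_sq (by norm_num)
  have h2 := h.div_const (Real.sqrt (2 * Real.pi))
  have h3 : Integrable (fun t : ℝ => t * phi t) := by
    refine h2.congr (Eventually.of_forall fun t => ?_)
    simp only [phi_eq]; ring
  exact h3.integrableOn

lemma integral_mul_phi (s : ℝ) :
    ∫ t in Set.Ioi s, t * phi t = Real.exp (-s ^ 2 / 2) / Real.sqrt (2 * Real.pi) := by
  have hderiv : ∀ t ∈ Set.Ici s, HasDerivAt
      (fun t : ℝ => -(Real.exp (-t ^ 2 / 2) / Real.sqrt (2 * Real.pi))) (t * phi t) t := by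
    intro t _
    have h1 : HasDerivAt (fun t : ℝ => -t ^ 2 / 2) (-t) t := by
      have := ((hasDerivAt_pow 2 t).neg).div_const 2
      simpa using this.congr_deriv (by push_cast; ring)
    have h2 := (h1.exp).div_const (Real.sqrt (2 * Real.pi))
    have h3 := h2.neg
    refine h3.congr_deriv ?_
    unfold phi; ring
  have htend : Tendsto (fun t : ℝ => -(Real.exp (-t ^ 2 / 2) / Real.sqrt (2 * Real.pi)))
      atTop (nhds 0) := by
    rw [show (0:ℝ) = -(0 / Real.sqrt (2 * Real.pi)) by ring]
    refine Tendsto.neg (Tendsto.div_const ?_ _)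
    refine Real.tendsto_exp_atBot.comp ?_
    have : Tendsto (fun t : ℝ => t ^ 2 / 2) atTop atTop :=
      (tendsto_pow_atTop (by norm_num)).atTop_div_const (by norm_num)
    have h4 : Tendsto (fun t : ℝ => -(t ^ 2 / 2)) atTop atBot := tendsto_neg_atBot_iff.mpr this
    exact h4.congr fun t => by ring
  have := MeasureTheory.integral_Ioi_of_hasDerivAt_of_tendsto' hderiv (integrable_mul_phi s) htend
  rw [this]; ring

lemma gaussQ_le_mills {s : ℝ} (hs : 0 < s) :
    gaussQ s ≤ Real.exp (-s ^ 2 / 2) / (s * Real.sqrt (2 * Real.pi)) := by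
  have hint : IntegrableOn (fun t => t / s * phi t) (Set.Ioi s) := by
    have := (integrable_mul_phi s).div_const s
    exact this.congr (Eventually.of_forall fun t => by ring)
  have hmono : gaussQ s ≤ ∫ t in Set.Ioi s, t / s * phi t := by
    rw [gaussQ_eq_phi]
    refine MeasureTheory.setIntegral_mono_on integrable_phi.integrableOn hint measurableSet_Ioi ?_
    intro t ht
    have h1 : (1:ℝ) ≤ t / s := (one_le_div hs).mpr (le_of_lt ht)
    nlinarith [phi_pos t]
  have heq : ∫ t in Set.Ioi s, t / s * phi t = (∫ t in Set.Ioi s, t * phi t) / s := by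
    rw [← MeasureTheory.integral_div]
    exact MeasureTheory.setIntegral_congr_fun measurableSet_Ioi fun t _ => by ring
  rw [heq, integral_mul_phi] at hmono
  calc gaussQ s ≤ Real.exp (-s ^ 2 / 2) / Real.sqrt (2 * Real.pi) / s := hmono
    _ = Real.exp (-s ^ 2 / 2) / (s * Real.sqrt (2 * Real.pi)) := by ring

lemma gaussq_le {s : ℝ} (hs : 0 < s) : gaussq s ≤ 1 / (s * Real.sqrt (2 * Real.pi)) := by
  unfold gaussq
  have h := gaussQ_le_mills hs
  have h2 : Real.exp (s ^ 2 / 2) * gaussQ s ≤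
      Real.exp (s ^ 2 / 2) * (Real.exp (-s ^ 2 / 2) / (s * Real.sqrt (2 * Real.pi))) :=
    mul_le_mul_of_nonneg_left h (Real.exp_nonneg _)
  calc Real.exp (s ^ 2 / 2) * gaussQ s ≤ _ := h2
    _ = 1 / (s * Real.sqrt (2 * Real.pi)) := by
        rw [mul_div_assoc', ← Real.exp_add, show s ^ 2 / 2 + -s ^ 2 / 2 = 0 by ring,
          Real.exp_zero]

lemma log_taylor {d : ℝ} (h0 : 0 ≤ d) (h2 : d ≤ 1/2) :
    |Real.log (1+d) - (d - d^2/2)| ≤ 2*d^3 := by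
  have habs : |(-d : ℝ)| = d := by rw [abs_neg, abs_of_nonneg h0]
  have h := Real.abs_log_sub_add_sum_range_le (x := -d) (by rw [habs]; linarith) 2
  rw [habs] at h
  simp only [Finset.sum_range_succ, Finset.sum_range_zero] at h
  have heq : (1 : ℝ) - -d = 1 + d := by ring
  rw [heq] at h
  have h3 : |Real.log (1+d) - (d - d^2/2)| ≤ d^3 / (1-d) := by
    calc |Real.log (1+d) - (d - d^2/2)|
        = |0 + (-d)^(0+1)/((0:ℕ)+1) + (-d)^(1+1)/((1:ℕ)+1) + Real.log (1+d)| := by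
          congr 1; push_cast; ring
      _ ≤ d ^ (2+1) / (1-d) := h
      _ = d^3 / (1-d) := by norm_num
  calc |Real.log (1+d) - (d - d^2/2)| ≤ d^3 / (1-d) := h3
    _ ≤ d^3 / (1/2) := by
        apply div_le_div_of_nonneg_left (by positivity) (by norm_num) (by linarith)
    _ = 2*d^3 := by ring

lemma gaussq_zero : gaussq 0 = 1/2 := by
  unfold gaussq; simp [gaussQ_zero]

lemma gaussq_nonneg (y : ℝ) : 0 ≤ gaussq y :=
  mul_nonneg (Real.exp_nonneg _) (gaussQ_nonneg y)

lemma continuous_gaussq : Continuous gaussq := by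
  unfold gaussq
  exact (Real.continuous_exp.comp (by continuity)).mul continuous_gaussQ

lemma gaussq_exp_eq (s c : ℝ) :
    gaussq s * Real.exp (-c) = gaussQ s * Real.exp (s^2/2 - c) := by
  unfold gaussq
  rw [mul_comm (Real.exp (s^2/2)) (gaussQ s), mul_assoc, ← Real.exp_add]
  ring_nf

lemma sqrt_nd {n d : ℝ} (hn : 0 ≤ n) (hd : 0 ≤ d) :
    Real.sqrt (n * d^2 / 2) = Real.sqrt (n/2) * d := by
  rw [show n * d^2/2 = (n/2) * d^2 by ring, Real.sqrt_mul (by positivity),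
    Real.sqrt_sq hd]

lemma exists_sol {Pe : ℝ} (hPe : Pe ∈ Set.Ioo 0 (1/2 : ℝ)) {n : ℕ} (hn : 1 ≤ n) :
    ∃ l : ℝ, 1 < l ∧
      gaussq (Real.sqrt ((n : ℝ) * (l - 1) ^ 2 / 2)) *
        Real.exp (-((n : ℝ) / 2) * (l - 1 - Real.log l)) = Pe := by
  obtain ⟨hPe0, hPe2⟩ := hPe
  have hn0 : (0:ℝ) < n := by exact_mod_cast hn
  set M : ℝ := 1 / (Pe * Real.sqrt (2 * Real.pi)) with hM
  have hMpos : 0 < M := by positivity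
  set L : ℝ := 1 + (M + 1) * Real.sqrt (2 / n) with hL
  have hsq : (0:ℝ) < Real.sqrt (2 / n) := Real.sqrt_pos.mpr (by positivity)
  have hL1 : 1 < L := by rw [hL]; nlinarith
  set F : ℝ → ℝ := fun l => gaussq (Real.sqrt ((n : ℝ) * (l - 1) ^ 2 / 2)) *
        Real.exp (-((n : ℝ) / 2) * (l - 1 - Real.log l)) with hF
  have hcont : ContinuousOn F (Set.Icc 1 L) := by
    apply ContinuousOn.mul
    · exact (continuous_gaussq.comp (by continuity)).continuousOn
    · apply Real.continuous_exp.comp_continuousOn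
      apply ContinuousOn.mul continuousOn_const
      apply ContinuousOn.sub (by fun_prop)
      exact Real.continuousOn_log.mono (fun y hy => by
        simp only [Set.mem_compl_iff, Set.mem_singleton_iff]
        have := hy.1; intro h; rw [h] at this; linarith)
  have hF1 : F 1 = 1 / 2 := by
    simp only [hF]
    norm_num [gaussq_zero]
  have hnn : Real.sqrt ((n:ℝ)/2) * Real.sqrt (2/(n:ℝ)) = 1 := by
    rw [← Real.sqrt_mul (by positivity)]
    rw [show (n:ℝ)/2 * (2/n) = 1 by field_simp]
    exact Real.sqrt_one
  have hsL : Real.sqrt ((n : ℝ) * (L - 1) ^ 2 / 2) = M + 1 := by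
    rw [sqrt_nd hn0.le (by linarith : (0:ℝ) ≤ L - 1)]
    rw [show L - 1 = (M+1) * Real.sqrt (2/n) by rw [hL]; ring]
    calc Real.sqrt ((n:ℝ)/2) * ((M+1) * Real.sqrt (2/n))
        = (M+1) * (Real.sqrt ((n:ℝ)/2) * Real.sqrt (2/(n:ℝ))) := by ring
      _ = M + 1 := by rw [hnn]; ring
  have hFL : F L < Pe := by
    have hexp : Real.exp (-((n : ℝ) / 2) * (L - 1 - Real.log L)) ≤ 1 := by
      rw [Real.exp_le_one_iff]
      have h6 := Real.log_le_sub_one_of_pos (by linarith : (0:ℝ) < L)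
      have h5 : 0 ≤ ((n:ℝ)/2) * (L - 1 - Real.log L) :=
        mul_nonneg (by positivity) (by linarith)
      linarith
    have h1 : F L ≤ gaussq (M + 1) := by
      rw [hF]
      simp only [hsL]
      calc gaussq (M+1) * Real.exp (-((n : ℝ) / 2) * (L - 1 - Real.log L))
          ≤ gaussq (M+1) * 1 := mul_le_mul_of_nonneg_left hexp (gaussq_nonneg _)
        _ = gaussq (M+1) := mul_one _
    have h2 : gaussq (M + 1) ≤ 1 / ((M+1) * Real.sqrt (2 * Real.pi)) :=
      gaussq_le (by linarith)
    have h3 : 1 / ((M+1) * Real.sqrt (2 * Real.pi)) < 1 / (M * Real.sqrt (2 * Real.pi)) := by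
      apply div_lt_div_of_pos_left one_pos (by positivity)
      have : (0:ℝ) < Real.sqrt (2 * Real.pi) := by positivity
      nlinarith
    have h4 : 1 / (M * Real.sqrt (2 * Real.pi)) = Pe := by
      rw [hM]
      field_simp
    linarith
  have hmem : Pe ∈ Set.Icc (F L) (F 1) := ⟨hFL.le, by rw [hF1]; linarith⟩
  obtain ⟨l, hl, hlF⟩ := intermediate_value_Icc' hL1.le hcont hmem
  refine ⟨l, ?_, hlF⟩
  rcases eq_or_lt_of_le hl.1 with h | h
  · exfalso; rw [← h] at hlF; rw [hF1] at hlF; linarith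
  · exact h

lemma key {Pe : ℝ} (hPe : Pe ∈ Set.Ioo 0 (1/2:ℝ)) {x : ℝ} (hx : 0 < x)
    (hxQ : gaussQ (Real.sqrt x) = Pe) (l : ℕ → ℝ)
    (hl : ∀ n : ℕ, 1 ≤ n → 1 < l n ∧
      gaussq (Real.sqrt ((n : ℝ) * (l n - 1) ^ 2 / 2)) *
        Real.exp (-((n : ℝ) / 2) * (l n - 1 - Real.log (l n))) = Pe) :
    Tendsto (fun n : ℕ => Real.sqrt ((n:ℝ)/2) * (l n - 1)) atTop (nhds (Real.sqrt x)) ∧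
    Tendsto (fun n : ℕ => l n - 1) atTop (nhds 0) := by
  obtain ⟨hPe0, hPe2⟩ := hPe
  set M : ℝ := 1 / (Pe * Real.sqrt (2 * Real.pi)) with hM
  have hMpos : 0 < M := by positivity
  set s : ℕ → ℝ := fun n => Real.sqrt ((n:ℝ)/2) * (l n - 1) with hs
  set d : ℕ → ℝ := fun n => l n - 1 with hd
  have hdpos : ∀ n : ℕ, 1 ≤ n → 0 < d n := fun n hn => by
    have := (hl n hn).1; simp only [hd]; linarith
  have hnn : ∀ n : ℕ, 1 ≤ n → Real.sqrt ((n:ℝ)/2) * Real.sqrt (2/(n:ℝ)) = 1 := by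
    intro n hn
    have hn0 : (0:ℝ) < n := by exact_mod_cast hn
    rw [← Real.sqrt_mul (by positivity), show (n:ℝ)/2 * (2/n) = 1 by field_simp]
    exact Real.sqrt_one
  have hspos : ∀ n : ℕ, 1 ≤ n → 0 < s n := by
    intro n hn
    have hn0 : (0:ℝ) < n := by exact_mod_cast hn
    exact mul_pos (Real.sqrt_pos.mpr (by positivity)) (hdpos n hn)
  have eq1 : ∀ n : ℕ, 1 ≤ n →
      gaussq (s n) * Real.exp (-((n : ℝ) / 2) * (d n - Real.log (l n))) = Pe := by
    intro n hn
    have hn0 : (0:ℝ) ≤ n := by positivity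
    have := (hl n hn).2
    rw [sqrt_nd hn0 (le_of_lt (hdpos n hn))] at this
    simpa [hs, hd, sub_sub] using this
  -- s is bounded by M
  have hsM : ∀ n : ℕ, 1 ≤ n → s n ≤ M := by
    intro n hn
    have h1 := eq1 n hn
    have hln : Real.log (l n) ≤ l n - 1 :=
      Real.log_le_sub_one_of_pos (by linarith [(hl n hn).1])
    have hexp : Real.exp (-((n : ℝ) / 2) * (d n - Real.log (l n))) ≤ 1 := by
      rw [Real.exp_le_one_iff]
      have h5 : 0 ≤ ((n:ℝ)/2) * (d n - Real.log (l n)) :=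
        mul_nonneg (by positivity) (by simp only [hd]; linarith)
      linarith
    have hPele : Pe ≤ gaussq (s n) := by
      calc Pe = gaussq (s n) * Real.exp (-((n : ℝ) / 2) * (d n - Real.log (l n))) := h1.symm
        _ ≤ gaussq (s n) * 1 := mul_le_mul_of_nonneg_left hexp (gaussq_nonneg _)
        _ = gaussq (s n) := mul_one _
    have hmills := gaussq_le (hspos n hn)
    have h2 : Pe ≤ 1 / (s n * Real.sqrt (2 * Real.pi)) := le_trans hPele hmills
    have hsp := hspos n hn
    have hsq2 : (0:ℝ) < Real.sqrt (2 * Real.pi) := by positivity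
    rw [hM]
    rw [le_div_iff₀ (by positivity)] at h2 ⊢
    calc s n * (Pe * Real.sqrt (2*Real.pi)) = Pe * (s n * Real.sqrt (2*Real.pi)) := by ring
      _ ≤ 1 := h2
  have hdM : ∀ n : ℕ, 1 ≤ n → d n ≤ M * Real.sqrt (2/(n:ℝ)) := by
    intro n hn
    have h := hsM n hn
    have h2 := hnn n hn
    have hsq : 0 < Real.sqrt (2/(n:ℝ)) := by
      have hn0 : (0:ℝ) < n := by exact_mod_cast hn
      positivity
    calc d n = s n * Real.sqrt (2/(n:ℝ)) := by
          simp only [hs]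
          rw [mul_comm (Real.sqrt ((n:ℝ)/2)) (l n - 1), mul_assoc, h2, mul_one]
      _ ≤ M * Real.sqrt (2/(n:ℝ)) := mul_le_mul_of_nonneg_right h hsq.le
  have hsqrt_tend : Tendsto (fun n : ℕ => Real.sqrt (2/(n:ℝ))) atTop (nhds 0) := by
    have h1 : Tendsto (fun n : ℕ => (2:ℝ)/n) atTop (nhds 0) :=
      tendsto_const_div_atTop_nhds_zero_nat 2
    have h2 := (Real.continuous_sqrt.tendsto 0).comp h1
    rw [Real.sqrt_zero] at h2
    exact h2
  have hdtend : Tendsto d atTop (nhds 0) := by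
    apply tendsto_of_tendsto_of_tendsto_of_le_of_le' tendsto_const_nhds
      (show Tendsto (fun n : ℕ => M * Real.sqrt (2/(n:ℝ))) atTop (nhds 0) by
        simpa using hsqrt_tend.const_mul M)
    · filter_upwards [eventually_ge_atTop 1] with n hn
      exact (hdpos n hn).le
    · filter_upwards [eventually_ge_atTop 1] with n hn
      exact hdM n hn
  -- epsilon
  set ε : ℕ → ℝ := fun n => ((n:ℝ)/2) * ((d n)^2/2 - d n + Real.log (l n)) with hε
  have hεtend : Tendsto ε atTop (nhds 0) := by
    have hg : Tendsto (fun n : ℕ => (2 * M^3) * Real.sqrt (2/(n:ℝ))) atTop (nhds 0) := by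
      simpa using hsqrt_tend.const_mul (2*M^3)
    refine squeeze_zero_norm' ?_ hg
    · have hev : ∀ᶠ n : ℕ in atTop, d n ≤ 1/2 := by
        have := hdtend.eventually (eventually_le_nhds (by norm_num : (0:ℝ) < 1/2))
        filter_upwards [this] with n h using h
      filter_upwards [hev, eventually_ge_atTop 1] with n hd2 hn
      rw [Real.norm_eq_abs]
      have hn0 : (0:ℝ) < n := by exact_mod_cast hn
      have hlog : |Real.log (1 + d n) - (d n - (d n)^2/2)| ≤ 2*(d n)^3 :=
        log_taylor (hdpos n hn).le hd2
      have hl1 : l n = 1 + d n := by simp [hd]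
      have h1 : |ε n| ≤ ((n:ℝ)/2) * (2*(d n)^3) := by
        rw [hε]
        simp only
        rw [abs_mul, abs_of_nonneg (by positivity : (0:ℝ) ≤ (n:ℝ)/2)]
        apply mul_le_mul_of_nonneg_left _ (by positivity)
        rw [hl1]
        calc |(d n)^2/2 - d n + Real.log (1 + d n)|
            = |Real.log (1 + d n) - (d n - (d n)^2/2)| := by ring_nf
          _ ≤ 2*(d n)^3 := hlog
      refine le_trans h1 ?_
      have hdb := hdM n hn
      have hdp := (hdpos n hn).le
      have hsq : 0 ≤ Real.sqrt (2/(n:ℝ)) := Real.sqrt_nonneg _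
      have h3 : (d n)^3 ≤ (M * Real.sqrt (2/(n:ℝ)))^3 := by
        apply pow_le_pow_left₀ hdp hdb
      have h4 : ((n:ℝ)/2) * (2*(d n)^3) ≤ ((n:ℝ)/2) * (2*(M * Real.sqrt (2/(n:ℝ)))^3) := by
        apply mul_le_mul_of_nonneg_left _ (by positivity)
        linarith
      refine le_trans h4 (le_of_eq ?_)
      have h5 : (Real.sqrt (2/(n:ℝ)))^2 = 2/(n:ℝ) := Real.sq_sqrt (by positivity)
      have : (Real.sqrt (2/(n:ℝ)))^3 = (2/(n:ℝ)) * Real.sqrt (2/(n:ℝ)) := by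
        rw [pow_succ, h5]
      rw [mul_pow, this]
      field_simp
  -- gaussQ (s n) = Pe * exp (-ε n)
  have hQeq : ∀ n : ℕ, 1 ≤ n → gaussQ (s n) = Pe * Real.exp (-ε n) := by
    intro n hn
    have h1 := eq1 n hn
    have hn0 : (0:ℝ) ≤ n := by positivity
    rw [show -((n:ℝ)/2) * (d n - Real.log (l n))
        = -(((n:ℝ)/2) * (d n - Real.log (l n))) by ring] at h1
    rw [gaussq_exp_eq] at h1
    have hs2 : (s n)^2 = ((n:ℝ)/2) * (d n)^2 := by
      simp only [hs, hd, mul_pow]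
      rw [Real.sq_sqrt (by positivity)]
    have harg : (s n)^2/2 - ((n : ℝ) / 2) * (d n - Real.log (l n)) = ε n := by
      rw [hs2, hε]; ring
    rw [harg] at h1
    rw [← h1, Real.exp_neg, mul_assoc, mul_inv_cancel₀ (Real.exp_ne_zero _), mul_one]
  have hQtend : Tendsto (fun n : ℕ => gaussQ (s n)) atTop (nhds Pe) := by
    have h1 : Tendsto (fun n : ℕ => Pe * Real.exp (-ε n)) atTop (nhds Pe) := by
      have h0 : Tendsto (fun n : ℕ => -ε n) atTop (nhds 0) := by simpa using hεtend.neg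
      have h3 := (Real.continuous_exp.tendsto 0).comp h0
      rw [Real.exp_zero] at h3
      simpa using h3.const_mul Pe
    apply h1.congr'
    filter_upwards [eventually_ge_atTop 1] with n hn
    exact (hQeq n hn).symm
  have hstend : Tendsto s atTop (nhds (Real.sqrt x)) := by
    rw [tendsto_order]
    constructor
    · intro a ha
      have hgt : Pe < gaussQ a := by rw [← hxQ]; exact gaussQ_strictAnti ha
      have := hQtend.eventually (eventually_lt_nhds hgt)
      filter_upwards [this] with n hn
      by_contra hcon
      push_neg at hcon
      exact absurd (gaussQ_strictAnti.antitone hcon) (not_le.mpr hn)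
    · intro a ha
      have hlt : gaussQ a < Pe := by rw [← hxQ]; exact gaussQ_strictAnti ha
      have := hQtend.eventually (eventually_gt_nhds hlt)
      filter_upwards [this] with n hn
      by_contra hcon
      push_neg at hcon
      exact absurd (gaussQ_strictAnti.antitone hcon) (not_le.mpr hn)
  exact ⟨hstend, hdtend⟩

/-- For fixed `P_e ∈ (0, 1/2)` and each `n ≥ 1`, the equation
`q(√(n(λ'−1)²/2)) e^{−(n/2)(λ'−1−ln λ')} = P_e` has a solution `λ' > 1`; as
`n → ∞` any such solution satisfies `λ' = 1 + √(2x/n) + o(1/√n)` where `x`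
solves `Q(√x) = P_e` (i.e. `√x = Q⁻¹(P_e)`); consequently
`10 log₁₀ λ' ∼ 10 log₁₀(e) √(2/n) Q⁻¹(P_e)`. -/
theorem stmt_18 (Pe : ℝ) (hPe : Pe ∈ Set.Ioo 0 (1 / 2 : ℝ))
    (x : ℝ) (hx : 0 < x) (hxQ : gaussQ (Real.sqrt x) = Pe) :
    (∀ n : ℕ, 1 ≤ n → ∃ l : ℝ, 1 < l ∧
      gaussq (Real.sqrt ((n : ℝ) * (l - 1) ^ 2 / 2)) *
        Real.exp (-((n : ℝ) / 2) * (l - 1 - Real.log l)) = Pe) ∧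
    ∀ l : ℕ → ℝ,
      (∀ n : ℕ, 1 ≤ n → 1 < l n ∧
        gaussq (Real.sqrt ((n : ℝ) * (l n - 1) ^ 2 / 2)) *
          Real.exp (-((n : ℝ) / 2) * (l n - 1 - Real.log (l n))) = Pe) →
      (fun n : ℕ => l n - 1 - Real.sqrt (2 * x / (n : ℝ))) =o[atTop]
        (fun n : ℕ => 1 / Real.sqrt (n : ℝ)) ∧
      (fun n : ℕ => 10 * Real.logb 10 (l n)) ~[atTop]
        (fun n : ℕ => 10 * Real.logb 10 (Real.exp 1) *
          Real.sqrt (2 / (n : ℝ)) * Real.sqrt x) := by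
  constructor
  · intro n hn
    exact exists_sol hPe hn
  · intro l hl
    obtain ⟨hstend, hdtend⟩ := key hPe hx hxQ l hl
    have hxs : (0:ℝ) < Real.sqrt x := Real.sqrt_pos.mpr hx
    constructor
    · -- little-o
      rw [isLittleO_iff_tendsto']
      · have hgoal : Tendsto (fun n : ℕ =>
            Real.sqrt 2 * (Real.sqrt ((n:ℝ)/2) * (l n - 1) - Real.sqrt x)) atTop (nhds 0) := by
          have := (hstend.sub_const (Real.sqrt x)).const_mul (Real.sqrt 2)
          simpa using this
        apply hgoal.congr'
        filter_upwards [eventually_ge_atTop 1] with n hn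
        have hn0 : (0:ℝ) < n := by exact_mod_cast hn
        have hsn : (0:ℝ) < Real.sqrt n := Real.sqrt_pos.mpr hn0
        have e1 : Real.sqrt (2 * x / (n:ℝ)) * Real.sqrt n = Real.sqrt (2*x) := by
          rw [← Real.sqrt_mul (by positivity), div_mul_cancel₀]
          exact ne_of_gt hn0
        have e2 : Real.sqrt 2 * Real.sqrt ((n:ℝ)/2) = Real.sqrt n := by
          rw [← Real.sqrt_mul (by positivity), show (2:ℝ) * ((n:ℝ)/2) = n by ring]
        have e3 : Real.sqrt (2*x) = Real.sqrt 2 * Real.sqrt x :=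
          Real.sqrt_mul (by norm_num) x
        rw [div_div_eq_mul_div, div_one]
        calc Real.sqrt 2 * (Real.sqrt ((n:ℝ)/2) * (l n - 1) - Real.sqrt x)
            = (Real.sqrt 2 * Real.sqrt ((n:ℝ)/2)) * (l n - 1)
              - (Real.sqrt 2 * Real.sqrt x) := by ring
          _ = Real.sqrt n * (l n - 1) - Real.sqrt (2*x) := by rw [e2, ← e3]
          _ = (l n - 1 - Real.sqrt (2 * x / (n:ℝ))) * Real.sqrt n := by
              rw [← e1]; ring
      · filter_upwards [eventually_ge_atTop 1] with n hn h
        exfalso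
        have hn0 : (0:ℝ) < n := by exact_mod_cast hn
        have : (0:ℝ) < 1 / Real.sqrt n := by positivity
        rw [h] at this
        exact lt_irrefl 0 this
    · -- equivalence
      have hlogb : Real.logb 10 (Real.exp 1) = 1 / Real.log 10 := by
        rw [Real.logb, Real.log_exp]
      have hlog10 : (0:ℝ) < Real.log 10 := Real.log_pos (by norm_num)
      rw [isEquivalent_iff_tendsto_one]
      · -- ratio tends to 1
        have hl1 : Tendsto l atTop (nhds 1) := by
          have := hdtend.add_const 1
          simp only [zero_add] at this
          exact this.congr fun n => by ring
        have hlne : Tendsto l atTop (nhdsWithin 1 {(1:ℝ)}ᶜ) := by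
          rw [tendsto_nhdsWithin_iff]
          refine ⟨hl1, ?_⟩
          filter_upwards [eventually_ge_atTop 1] with n hn
          exact ne_of_gt (hl n hn).1
        have hslope := hasDerivAt_iff_tendsto_slope.mp (Real.hasDerivAt_log one_ne_zero)
        have hf1 : Tendsto (fun n : ℕ => Real.log (l n) / (l n - 1)) atTop (nhds 1) := by
          have h2 := hslope.comp hlne
          rw [inv_one] at h2
          apply h2.congr
          intro n
          simp [slope_def_field, Real.log_one]
        have hf2 : Tendsto (fun n : ℕ => Real.sqrt ((n:ℝ)/2) * (l n - 1) / Real.sqrt x)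
            atTop (nhds 1) := by
          have := hstend.div_const (Real.sqrt x)
          rwa [div_self (ne_of_gt hxs)] at this
        have hprod := hf1.mul hf2
        rw [mul_one] at hprod
        apply hprod.congr'
        filter_upwards [eventually_ge_atTop 1] with n hn
        have hn0 : (0:ℝ) < n := by exact_mod_cast hn
        have hlpos := (hl n hn).1
        have hdne : l n - 1 ≠ 0 := by linarith
        have hs2n : (0:ℝ) < Real.sqrt (2/(n:ℝ)) := Real.sqrt_pos.mpr (by positivity)
        have hnn : Real.sqrt ((n:ℝ)/2) * Real.sqrt (2/(n:ℝ)) = 1 := by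
          rw [← Real.sqrt_mul (by positivity), show (n:ℝ)/2 * (2/n) = 1 by field_simp]
          exact Real.sqrt_one
        simp only [Pi.div_apply]
        rw [Real.logb, hlogb]
        field_simp
        linear_combination (Real.log (l n)) * hnn
      · filter_upwards [eventually_ge_atTop 1] with n hn
        have hn0 : (0:ℝ) < n := by exact_mod_cast hn
        have hs2n : (0:ℝ) < Real.sqrt (2/(n:ℝ)) := Real.sqrt_pos.mpr (by positivity)
        rw [hlogb]
        positivity
end
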